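/- Let A be a unital Banach algebra over ℂ and let X_1, …, X_n ∈ A. Define F : ℝ → A by F(s) = (1/2)(∏_{j=1}^{n} exp(s • X_j) + ∏_{j=n}^{1} exp(s • X_j)). Then the third derivative of F at 0 equals Σ_j X_j³ + (3/2) Σ_{j≠k} (X_j² X_k + X_j X_k²) + 3 Σ_{1 ≤ j < k < l ≤ n} (X_j X_k X_l + X_l X_k X_j). -/

import Mathlib

open NormedSpace

/-- The symmetrized first-order Trotter product
`F(s) = ½(∏_{j=1}^{n} exp(s • X_j) + ∏_{j=n}^{1} exp(s • X_j))`. -/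
noncomputable def symTrotter {A : Type*} [NormedRing A] [NormedAlgebra ℂ A]
    [CompleteSpace A] {n : ℕ} (X : Fin n → A) (s : ℝ) : A :=
  (1 / 2 : ℝ) • ((List.ofFn fun j => exp (s • X j)).prod
    + ((List.ofFn fun j => exp (s • X j)).reverse).prod)

open scoped ContDiff

section Aux

set_option linter.unusedSectionVars false

variable {A : Type*} [NormedRing A] [NormedAlgebra ℂ A] [CompleteSpace A]

lemma contDiff_expR (x : A) : ContDiff ℝ ∞ (fun t : ℝ => exp (t • x)) := by
  have H : ∀ n : ℕ, ContDiff ℝ n (fun t : ℝ => exp (t • x)) := by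
    intro n; induction n with
    | zero =>
      rw [show ((0:ℕ) : WithTop ℕ∞) = 0 from rfl, contDiff_zero]
      exact (Differentiable.continuous fun s => (hasDerivAt_exp_smul_const' x s).differentiableAt)
    | succ n ih =>
      rw [show ((n+1:ℕ) : WithTop ℕ∞) = (n : WithTop ℕ∞) + 1 by push_cast; ring,
        contDiff_succ_iff_deriv]
      refine ⟨fun s => (hasDerivAt_exp_smul_const' x s).differentiableAt, by simp, ?_⟩
      have : deriv (fun t : ℝ => exp (t • x)) = fun s => x * exp (s • x) :=
        funext fun s => (hasDerivAt_exp_smul_const' x s).deriv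
      rw [this]
      exact contDiff_const.mul ih
  exact contDiff_infty.mpr H

lemma sm_deriv {f : ℝ → A} (hf : ContDiff ℝ ∞ f) : ContDiff ℝ ∞ (deriv f) :=
  (contDiff_infty_iff_deriv.mp hf).2

lemma sm_diff {f : ℝ → A} (hf : ContDiff ℝ ∞ f) : Differentiable ℝ f :=
  hf.differentiable (by simp)

lemma deriv_funmul {f g : ℝ → A} (hf : ContDiff ℝ ∞ f) (hg : ContDiff ℝ ∞ g) :
    deriv (fun t => f t * g t) = fun t => deriv f t * g t + f t * deriv g t :=
  funext fun s => ((sm_diff hf s).hasDerivAt.mul (sm_diff hg s).hasDerivAt).deriv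

lemma deriv_funadd {f g : ℝ → A} (hf : Differentiable ℝ f) (hg : Differentiable ℝ g) :
    deriv (fun t => f t + g t) = fun t => deriv f t + deriv g t :=
  funext fun s => ((hf s).hasDerivAt.add (hg s).hasDerivAt).deriv

lemma it2_mul {f g : ℝ → A} (hf : ContDiff ℝ ∞ f) (hg : ContDiff ℝ ∞ g) :
    iteratedDeriv 2 (fun t => f t * g t) 0 =
      iteratedDeriv 2 f 0 * g 0 + 2 • (deriv f 0 * deriv g 0) + f 0 * iteratedDeriv 2 g 0 := by
  rw [show (2:ℕ) = 1+1 from rfl, iteratedDeriv_succ, iteratedDeriv_one,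
    iteratedDeriv_succ, iteratedDeriv_one, iteratedDeriv_succ, iteratedDeriv_one,
    deriv_funmul hf hg, deriv_funadd (f := fun t => deriv f t * g t) (g := fun t => f t * deriv g t) ((sm_diff (sm_deriv hf)).mul (sm_diff hg))
      ((sm_diff hf).mul (sm_diff (sm_deriv hg))),
    deriv_funmul (sm_deriv hf) hg, deriv_funmul hf (sm_deriv hg)]
  simp only [two_nsmul, add_nsmul, one_nsmul]
  abel

lemma it3_mul {f g : ℝ → A} (hf : ContDiff ℝ ∞ f) (hg : ContDiff ℝ ∞ g) :
    iteratedDeriv 3 (fun t => f t * g t) 0 =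
      iteratedDeriv 3 f 0 * g 0 + 3 • (iteratedDeriv 2 f 0 * deriv g 0)
        + 3 • (deriv f 0 * iteratedDeriv 2 g 0) + f 0 * iteratedDeriv 3 g 0 := by
  have h1 : deriv (fun t => f t * g t) = fun t => deriv f t * g t + f t * deriv g t :=
    deriv_funmul hf hg
  have h2 : deriv (fun t => deriv f t * g t + f t * deriv g t)
      = fun t => (deriv (deriv f) t * g t + deriv f t * deriv g t)
        + (deriv f t * deriv g t + f t * deriv (deriv g) t) := by
    rw [deriv_funadd (f := fun t => deriv f t * g t) (g := fun t => f t * deriv g t) ((sm_diff (sm_deriv hf)).mul (sm_diff hg))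
      ((sm_diff hf).mul (sm_diff (sm_deriv hg))),
      deriv_funmul (sm_deriv hf) hg, deriv_funmul hf (sm_deriv hg)]
  have h3 : deriv (fun t => (deriv (deriv f) t * g t + deriv f t * deriv g t)
        + (deriv f t * deriv g t + f t * deriv (deriv g) t)) 0
      = ((deriv (deriv (deriv f)) 0 * g 0 + deriv (deriv f) 0 * deriv g 0)
          + (deriv (deriv f) 0 * deriv g 0 + deriv f 0 * deriv (deriv g) 0))
        + ((deriv (deriv f) 0 * deriv g 0 + deriv f 0 * deriv (deriv g) 0)
          + (deriv f 0 * deriv (deriv g) 0 + f 0 * deriv (deriv (deriv g)) 0)) := by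
    rw [deriv_funadd (f := fun t => deriv (deriv f) t * g t + deriv f t * deriv g t)
        (g := fun t => deriv f t * deriv g t + f t * deriv (deriv g) t) (((sm_diff (sm_deriv (sm_deriv hf))).mul (sm_diff hg)).add
        ((sm_diff (sm_deriv hf)).mul (sm_diff (sm_deriv hg))))
      (((sm_diff (sm_deriv hf)).mul (sm_diff (sm_deriv hg))).add
        ((sm_diff hf).mul (sm_diff (sm_deriv (sm_deriv hg))))),
      deriv_funadd (f := fun t => deriv (deriv f) t * g t)
        (g := fun t => deriv f t * deriv g t) ((sm_diff (sm_deriv (sm_deriv hf))).mul (sm_diff hg))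
        ((sm_diff (sm_deriv hf)).mul (sm_diff (sm_deriv hg))),
      deriv_funadd (f := fun t => deriv f t * deriv g t)
        (g := fun t => f t * deriv (deriv g) t) ((sm_diff (sm_deriv hf)).mul (sm_diff (sm_deriv hg)))
        ((sm_diff hf).mul (sm_diff (sm_deriv (sm_deriv hg)))),
      deriv_funmul (sm_deriv (sm_deriv hf)) hg, deriv_funmul (sm_deriv hf) (sm_deriv hg),
      deriv_funmul hf (sm_deriv (sm_deriv hg))]
  rw [show (3:ℕ) = 1+1+1 from rfl, iteratedDeriv_succ, iteratedDeriv_succ, iteratedDeriv_one,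
    h1, h2, h3]
  rw [show iteratedDeriv 3 f 0 = deriv (deriv (deriv f)) 0 by
      rw [show (3:ℕ) = 1+1+1 from rfl, iteratedDeriv_succ, iteratedDeriv_succ, iteratedDeriv_one],
    show iteratedDeriv 3 g 0 = deriv (deriv (deriv g)) 0 by
      rw [show (3:ℕ) = 1+1+1 from rfl, iteratedDeriv_succ, iteratedDeriv_succ, iteratedDeriv_one],
    show iteratedDeriv 2 f 0 = deriv (deriv f) 0 by
      rw [show (2:ℕ) = 1+1 from rfl, iteratedDeriv_succ, iteratedDeriv_one],
    show iteratedDeriv 2 g 0 = deriv (deriv g) 0 by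
      rw [show (2:ℕ) = 1+1 from rfl, iteratedDeriv_succ, iteratedDeriv_one]]
  abel

/-- Ordered product of exponentials of a list. -/
noncomputable def pexp (L : List A) : ℝ → A := fun s => (L.map (fun x => exp (s • x))).prod

noncomputable def Q2 : List A → A
  | [] => 0
  | x :: L => x^2 + 2 • (x * L.sum) + Q2 L

noncomputable def Q3 : List A → A
  | [] => 0
  | x :: L => x^3 + 3 • (x^2 * L.sum) + 3 • (x * Q2 L) + Q3 L

lemma iter_expR (x : A) : ∀ k : ℕ,
    iteratedDeriv k (fun t : ℝ => exp (t • x)) = fun s => x ^ k * exp (s • x) := by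
  intro k; induction k with
  | zero => funext s; simp [iteratedDeriv_zero]
  | succ k ih =>
    rw [iteratedDeriv_succ, ih]
    funext s
    have : HasDerivAt (fun t : ℝ => x ^ k * exp (t • x)) (x ^ k * (x * exp (s • x))) s :=
      (hasDerivAt_exp_smul_const' x s).const_mul (x ^ k)
    rw [this.deriv, pow_succ, mul_assoc]

lemma iter_expR_zero (x : A) (k : ℕ) :
    iteratedDeriv k (fun t : ℝ => exp (t • x)) 0 = x ^ k := by
  rw [iter_expR]; simp

lemma deriv_expR_zero (x : A) : deriv (fun t : ℝ => exp (t • x)) 0 = x := by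
  have := iter_expR_zero x 1
  rwa [iteratedDeriv_one, pow_one] at this

lemma pexp_nil : pexp ([] : List A) = fun _ => 1 := by funext s; simp [pexp]

lemma pexp_cons (x : A) (L : List A) :
    pexp (x :: L) = fun s => exp (s • x) * pexp L s := by
  funext s; simp [pexp]

lemma pexp_contDiff (L : List A) : ContDiff ℝ ∞ (pexp L) := by
  induction L with
  | nil => rw [pexp_nil]; exact contDiff_const
  | cons x L ih => rw [pexp_cons]; exact (contDiff_expR x).mul ih

lemma pexp_vals (L : List A) :
    pexp L 0 = 1 ∧ deriv (pexp L) 0 = L.sum ∧ iteratedDeriv 2 (pexp L) 0 = Q2 L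
      ∧ iteratedDeriv 3 (pexp L) 0 = Q3 L := by
  induction L with
  | nil =>
    rw [pexp_nil]
    refine ⟨rfl, ?_, ?_, ?_⟩ <;>
      simp [Q2, Q3, iteratedDeriv_succ, iteratedDeriv_zero]
  | cons x L ih =>
    obtain ⟨h0, h1, h2, h3⟩ := ih
    have hx := contDiff_expR x
    have hL := pexp_contDiff L
    have e0 : exp ((0:ℝ) • x) = (1:A) := by simp
    refine ⟨?_, ?_, ?_, ?_⟩
    · rw [pexp_cons]; simp [h0, e0]
    · rw [pexp_cons]
      have := ((hasDerivAt_exp_smul_const' x (0:ℝ)).mul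
        ((pexp_contDiff L).differentiable (by simp) 0).hasDerivAt).deriv
      rw [show (fun s => exp (s • x) * pexp L s) = (fun u => exp (u • x)) * pexp L from rfl,
        this, h0, h1, e0, List.sum_cons]
      simp
    · rw [pexp_cons, it2_mul hx hL, iter_expR_zero, deriv_expR_zero, h0, h1, h2, e0]
      simp [Q2]
    · rw [pexp_cons, it3_mul hx hL, iter_expR_zero, iter_expR_zero, deriv_expR_zero,
        h0, h1, h2, h3, e0]
      simp [Q3]

lemma q2_ofFn {n : ℕ} (X : Fin n → A) :
    Q2 (List.ofFn X) = (∑ j, X j ^ 2)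
      + 2 • ∑ j, ∑ k, (if j < k then X j * X k else 0) := by
  induction n with
  | zero => simp [Q2]
  | succ n ih =>
    rw [List.ofFn_succ, Q2, ih, List.sum_ofFn]
    rw [Fin.sum_univ_succ (f := fun j => X j ^ 2)]
    rw [Fin.sum_univ_succ (f := fun j => ∑ k, (if j < k then X j * X k else 0))]
    rw [Fin.sum_univ_succ (f := fun k => if (0 : Fin (n+1)) < k then X 0 * X k else 0)]
    have e1 : ∀ j : Fin n, (∑ k, if j.succ < k then X j.succ * X k else 0)
        = ∑ k, (if j < k then X j.succ * X k.succ else 0) := by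
      intro j
      rw [Fin.sum_univ_succ]
      simp [Fin.succ_lt_succ_iff, Fin.not_lt_zero]
    simp only [e1, lt_self_iff_false, if_false, Fin.succ_pos, if_true, zero_add]
    rw [Finset.mul_sum]
    abel

lemma q3_ofFn {n : ℕ} (X : Fin n → A) :
    Q3 (List.ofFn X) = (∑ j, X j ^ 3)
      + 3 • (∑ j, ∑ k, (if j < k then X j ^ 2 * X k + X j * X k ^ 2 else 0))
      + 6 • (∑ j, ∑ k, ∑ l, (if j < k ∧ k < l then X j * X k * X l else 0)) := by
  induction n with
  | zero => simp [Q3]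
  | succ n ih =>
    rw [List.ofFn_succ, Q3, ih, List.sum_ofFn, q2_ofFn]
    rw [Fin.sum_univ_succ (f := fun j => X j ^ 3)]
    rw [Fin.sum_univ_succ
      (f := fun j => ∑ k, (if j < k then X j ^ 2 * X k + X j * X k ^ 2 else 0))]
    rw [Fin.sum_univ_succ
      (f := fun k => if (0 : Fin (n+1)) < k then X 0 ^ 2 * X k + X 0 * X k ^ 2 else 0)]
    rw [Fin.sum_univ_succ
      (f := fun j => ∑ k, ∑ l, (if j < k ∧ k < l then X j * X k * X l else 0))]
    have e1 : ∀ j : Fin n, (∑ k, if j.succ < k then X j.succ ^ 2 * X k + X j.succ * X k ^ 2 else 0)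
        = ∑ k, (if j < k then X j.succ ^ 2 * X k.succ + X j.succ * X k.succ ^ 2 else 0) := by
      intro j; rw [Fin.sum_univ_succ]; simp [Fin.succ_lt_succ_iff, Fin.not_lt_zero]
    have e2 : ∀ j : Fin n, (∑ k, ∑ l, if j.succ < k ∧ k < l then X j.succ * X k * X l else 0)
        = ∑ k, ∑ l, (if j < k ∧ k < l then X j.succ * X k.succ * X l.succ else 0) := by
      intro j
      rw [Fin.sum_univ_succ]
      have : ∀ k : Fin n, (∑ l : Fin (n+1), if j.succ < k.succ ∧ k.succ < l then X j.succ * X k.succ * X l else 0)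
          = ∑ l, (if j < k ∧ k < l then X j.succ * X k.succ * X l.succ else 0) := by
        intro k; rw [Fin.sum_univ_succ]; simp [Fin.succ_lt_succ_iff, Fin.not_lt_zero]
      simp only [this, Fin.not_lt_zero, false_and, if_false, Finset.sum_const_zero, zero_add]
    have e3 : (∑ k, ∑ l, if (0 : Fin (n+1)) < k ∧ k < l then X 0 * X k * X l else 0)
        = ∑ k : Fin n, ∑ l : Fin n, (if k < l then X 0 * X k.succ * X l.succ else 0) := by
      rw [Fin.sum_univ_succ]
      have : ∀ k : Fin n, (∑ l : Fin (n+1), if (0 : Fin (n+1)) < k.succ ∧ k.succ < l then X 0 * X k.succ * X l else 0)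
          = ∑ l : Fin n, (if k < l then X 0 * X k.succ * X l.succ else 0) := by
        intro k; rw [Fin.sum_univ_succ]; simp [Fin.succ_lt_succ_iff, Fin.not_lt_zero, Fin.succ_pos]
      simp only [this, lt_self_iff_false, false_and, if_false, Finset.sum_const_zero, zero_add]
    simp only [e1, e2, e3, lt_self_iff_false, if_false, Fin.succ_pos, if_true, zero_add]
    rw [Finset.mul_sum]
    have e4 : ∀ k : Fin n, X 0 * ∑ l : Fin n, (if k < l then X k.succ * X l.succ else 0)
        = ∑ l, (if k < l then X 0 * X k.succ * X l.succ else 0) := by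
      intro k
      rw [Finset.mul_sum]
      refine Finset.sum_congr rfl fun l _ => ?_
      split <;> simp [mul_assoc]
    have e6 : X 0 * (∑ j : Fin n, ∑ k : Fin n, if j < k then X j.succ * X k.succ else 0)
        = ∑ j : Fin n, ∑ k : Fin n, (if j < k then X 0 * X j.succ * X k.succ else 0) := by
      rw [Finset.mul_sum]; exact Finset.sum_congr rfl fun j _ => e4 j
    have smul_mul : ∀ (m : ℕ) (a b : A), a * (m • b) = m • (a * b) := fun m a b => by
      rw [mul_smul_comm]
    have expand : X 0 * ((∑ j : Fin n, X j.succ ^ 2) + 2 • ∑ j : Fin n, ∑ k : Fin n, (if j < k then X j.succ * X k.succ else 0))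
        = (∑ j : Fin n, X 0 * X j.succ ^ 2)
          + 2 • ∑ j : Fin n, ∑ k : Fin n, (if j < k then X 0 * X j.succ * X k.succ else 0) := by
      rw [mul_add, smul_mul, e6, Finset.mul_sum]
    rw [expand, Finset.sum_add_distrib]
    abel

lemma rev_ofFn {α : Type*} {n : ℕ} (X : Fin n → α) :
    (List.ofFn X).reverse = List.ofFn (fun i => X i.rev) := by
  apply List.ext_getElem
  · simp
  · intro i h1 h2
    simp only [List.getElem_reverse, List.getElem_ofFn, List.length_ofFn] at *
    congr 1
    ext
    simp [Fin.rev]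
    omega

lemma sum_rev {n : ℕ} (f : Fin n → A) : (∑ j, f (Fin.rev j)) = ∑ j, f j :=
  Fintype.sum_bijective Fin.rev Fin.rev_bijective _ _ (fun _ => rfl)

lemma sum2_rev {n : ℕ} (F : Fin n → Fin n → A) :
    (∑ j, ∑ k, F (Fin.rev j) (Fin.rev k)) = ∑ j, ∑ k, F j k := by
  calc (∑ j, ∑ k, F (Fin.rev j) (Fin.rev k)) = ∑ j, ∑ k, F (Fin.rev j) k :=
        Finset.sum_congr rfl fun j _ => sum_rev (F (Fin.rev j))
    _ = ∑ j, ∑ k, F j k := sum_rev (fun j => ∑ k, F j k)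

lemma sum3_rev {n : ℕ} (F : Fin n → Fin n → Fin n → A) :
    (∑ j, ∑ k, ∑ l, F (Fin.rev j) (Fin.rev k) (Fin.rev l)) = ∑ j, ∑ k, ∑ l, F j k l := by
  calc (∑ j, ∑ k, ∑ l, F (Fin.rev j) (Fin.rev k) (Fin.rev l))
      = ∑ j, ∑ k, ∑ l, F (Fin.rev j) k l :=
        Finset.sum_congr rfl fun j _ => sum2_rev (F (Fin.rev j))
    _ = ∑ j, ∑ k, ∑ l, F j k l := sum_rev (fun j => ∑ k, ∑ l, F j k l)

end Aux

/-- The third-order Taylor coefficient `3!·Â₃` of the symmetrized Trotter product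
(equation 18 of the paper):
`F'''(0) = Σ_j X_j³ + (3/2) Σ_{j≠k} (X_j² X_k + X_j X_k²)
  + 3 Σ_{j<k<l} (X_j X_k X_l + X_l X_k X_j)`. -/
theorem stmt_8 {A : Type*} [NormedRing A] [NormedAlgebra ℂ A]
    [CompleteSpace A] [NormOneClass A] (n : ℕ) (X : Fin n → A) :
    iteratedDeriv 3 (symTrotter X) 0
      = (∑ j : Fin n, (X j) ^ 3)
        + (3 / 2 : ℝ) • (∑ j : Fin n, ∑ k : Fin n,
            (if j ≠ k then (X j) ^ 2 * X k + X j * (X k) ^ 2 else 0))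
        + (3 : ℝ) • (∑ j : Fin n, ∑ k : Fin n, ∑ l : Fin n,
            (if j < k ∧ k < l then X j * X k * X l + X l * X k * X j else 0)) := by
  classical
  set Y : Fin n → A := fun i => X i.rev with hY
  have hexp : (exp : A → A) = exp := rfl
  -- rewrite symTrotter as scaled sum of two pexp's
  have hrepr : symTrotter X = (1/2 : ℝ) • (pexp (List.ofFn X) + pexp (List.ofFn Y)) := by
    funext s
    simp only [symTrotter, pexp, Pi.smul_apply, Pi.add_apply, List.map_ofFn, hexp,
      rev_ofFn, Function.comp_def, hY]
  have hL := pexp_contDiff (List.ofFn X)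
  have hL' := pexp_contDiff (List.ofFn Y)
  have h3le : ((3:ℕ) : WithTop ℕ∞) ≤ ∞ := WithTop.coe_le_coe.mpr le_top
  have hsum : ContDiff ℝ ((3:ℕ) : WithTop ℕ∞) (pexp (List.ofFn X) + pexp (List.ofFn Y)) :=
    ((hL.add hL').of_le h3le)
  have step : iteratedDeriv 3 (symTrotter X) 0
      = (1/2 : ℝ) • (iteratedDeriv 3 (pexp (List.ofFn X)) 0
          + iteratedDeriv 3 (pexp (List.ofFn Y)) 0) := by
    rw [hrepr, ← iteratedDerivWithin_univ,
      iteratedDerivWithin_const_smul (Set.mem_univ (0:ℝ)) uniqueDiffOn_univ _ hsum.contDiffAt.contDiffWithinAt,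
      iteratedDerivWithin_add (Set.mem_univ (0:ℝ)) uniqueDiffOn_univ
        ((hL.of_le h3le).contDiffAt.contDiffWithinAt) ((hL'.of_le h3le).contDiffAt.contDiffWithinAt),
      iteratedDerivWithin_univ, iteratedDerivWithin_univ]
  rw [step, (pexp_vals (List.ofFn X)).2.2.2, (pexp_vals (List.ofFn Y)).2.2.2,
    q3_ofFn, q3_ofFn]
  -- reindex the reversed sums
  have hS3 : (∑ j, Y j ^ 3) = ∑ j, X j ^ 3 := sum_rev (fun j => X j ^ 3)
  have hP : (∑ j, ∑ k, (if j < k then Y j ^ 2 * Y k + Y j * Y k ^ 2 else 0))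
      = ∑ j, ∑ k, (if k < j then X j ^ 2 * X k + X j * X k ^ 2 else 0) := by
    have := sum2_rev (fun j k => if Fin.rev j < Fin.rev k then X j ^ 2 * X k + X j * X k ^ 2 else 0)
    simp only [Fin.rev_rev, Fin.rev_lt_rev] at this
    exact this
  have hT : (∑ j, ∑ k, ∑ l, (if j < k ∧ k < l then Y j * Y k * Y l else 0))
      = ∑ j, ∑ k, ∑ l, (if k < j ∧ l < k then X j * X k * X l else 0) := by
    have := sum3_rev (fun j k l =>
      if Fin.rev j < Fin.rev k ∧ Fin.rev k < Fin.rev l then X j * X k * X l else 0)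
    simp only [Fin.rev_rev, Fin.rev_lt_rev] at this
    exact this
  rw [hS3, hP, hT]
  -- split RHS double/triple sums
  have hsplit2 : (∑ j : Fin n, ∑ k : Fin n,
        (if j ≠ k then (X j) ^ 2 * X k + X j * (X k) ^ 2 else 0))
      = (∑ j, ∑ k, (if j < k then X j ^ 2 * X k + X j * X k ^ 2 else 0))
        + (∑ j, ∑ k, (if k < j then X j ^ 2 * X k + X j * X k ^ 2 else 0)) := by
    rw [← Finset.sum_add_distrib]
    refine Finset.sum_congr rfl fun j _ => ?_
    rw [← Finset.sum_add_distrib]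
    refine Finset.sum_congr rfl fun k _ => ?_
    rcases lt_trichotomy j k with h | h | h
    · simp [ne_of_lt h, h, asymm h]
    · simp [h]
    · simp [ne_of_gt h, h, asymm h]
  have hsplit3 : (∑ j : Fin n, ∑ k : Fin n, ∑ l : Fin n,
        (if j < k ∧ k < l then X j * X k * X l + X l * X k * X j else 0))
      = (∑ j, ∑ k, ∑ l, (if j < k ∧ k < l then X j * X k * X l else 0))
        + (∑ j, ∑ k, ∑ l, (if k < j ∧ l < k then X j * X k * X l else 0)) := by
    have swap : (∑ j : Fin n, ∑ k : Fin n, ∑ l : Fin n,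
          (if k < j ∧ l < k then X j * X k * X l else 0))
        = ∑ j : Fin n, ∑ k : Fin n, ∑ l : Fin n,
          (if j < k ∧ k < l then X l * X k * X j else 0) := by
      calc (∑ j : Fin n, ∑ k : Fin n, ∑ l : Fin n,
            (if k < j ∧ l < k then X j * X k * X l else 0))
          = ∑ j : Fin n, ∑ l : Fin n, ∑ k : Fin n,
            (if k < j ∧ l < k then X j * X k * X l else 0) :=
            Finset.sum_congr rfl fun j _ => Finset.sum_comm
        _ = ∑ l : Fin n, ∑ j : Fin n, ∑ k : Fin n,
            (if k < j ∧ l < k then X j * X k * X l else 0) := Finset.sum_comm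
        _ = ∑ l : Fin n, ∑ k : Fin n, ∑ j : Fin n,
            (if k < j ∧ l < k then X j * X k * X l else 0) :=
            Finset.sum_congr rfl fun l _ => Finset.sum_comm
        _ = ∑ j : Fin n, ∑ k : Fin n, ∑ l : Fin n,
            (if j < k ∧ k < l then X l * X k * X j else 0) := by
            refine Finset.sum_congr rfl fun l _ => Finset.sum_congr rfl fun k _ =>
              Finset.sum_congr rfl fun j _ => ?_
            simp only [and_comm]
    rw [swap, ← Finset.sum_add_distrib]
    refine Finset.sum_congr rfl fun j _ => ?_
    rw [← Finset.sum_add_distrib]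
    refine Finset.sum_congr rfl fun k _ => ?_
    rw [← Finset.sum_add_distrib]
    refine Finset.sum_congr rfl fun l _ => ?_
    split <;> simp
  rw [hsplit2, hsplit3]
  -- final module arithmetic
  simp only [← Nat.cast_smul_eq_nsmul ℝ]
  push_cast
  module
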